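/- There exist positive parameter values s, r_T, T_max, d, r_I, b, δ, ρ, R*, c for the in-host hepatitis C model such that: (i) δ > r_I(1 − p₀/T_max) and the basic reproductive ratio R₀ = bρR*/((b+c)(δ − r_I(1 − p₀/T_max))) satisfies R₀ < 1, where p₀ = (r_T − d + sqrt((r_T−d)² + 4sr_T/T_max))·T_max/(2r_T); (ii) there exist exactly two points (T, I, V) with T > 0, I > 0, V > 0 at which all three right-hand sides of the system vanish; and (iii) at one of these two points all eigenvalues (complex roots of the characteristic polynomial) of the 3×3 Jacobian matrix of the right-hand side have negative real parts, while at the other point the Jacobian has an eigenvalue with positive real part. -/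

import Mathlib

set_option maxHeartbeats 1000000 in
private lemma hd_aux (a b c e₁ e₂ k x : ℝ) (hx : x + k ≠ 0) :
    HasDerivAt (fun t : ℝ => a + b*t + c*(t*t) + (e₁*t + e₂)/(t+k))
      (b + 2*c*x + (e₁*k - e₂)/((x+k)*(x+k))) x := by
  have h1 : HasDerivAt (fun t : ℝ => a + b*t + c*(t*t)) (b + 2*c*x) x := by
    have := (((hasDerivAt_id x).const_mul b).const_add a).add
      (((hasDerivAt_id x).mul (hasDerivAt_id x)).const_mul c)
    refine this.congr_deriv ?_
    simp
    try ring
  have h2 : HasDerivAt (fun t : ℝ => e₁*t + e₂) e₁ x :=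
    (((hasDerivAt_id x).const_mul e₁).add_const e₂).congr_deriv (by simp)
  have h3 : HasDerivAt (fun t : ℝ => t + k) 1 x := (hasDerivAt_id x).add_const k
  have h4 := h2.div h3 hx
  have := h1.add h4
  refine this.congr_deriv ?_
  field_simp
  ring

private lemma rh_stable (z : ℂ) (h : z^3 + 78*z^2 + (3571/3)*z + 1520 = 0) : z.re < 0 := by
  by_contra hx
  push_neg at hx
  rw [Complex.ext_iff] at h
  obtain ⟨h1, h2⟩ := h
  simp only [Complex.add_re, Complex.add_im, Complex.mul_re, Complex.mul_im, pow_succ, pow_zero,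
    one_mul, Complex.one_re, Complex.one_im, Complex.zero_re, Complex.zero_im,
    Complex.div_re, Complex.div_im] at h1 h2
  norm_num at h1 h2
  set x := z.re
  set y := z.im
  have him : y * (3*x^2 - y^2 + 156*x + 3571/3) = 0 := by linear_combination h2
  rcases mul_eq_zero.mp him with hy | hq
  · rw [hy] at h1
    nlinarith [sq_nonneg x, mul_nonneg hx hx, mul_nonneg (mul_nonneg hx hx) hx]
  · nlinarith [h1, hq, hx, sq_nonneg y, mul_nonneg hx hx, mul_nonneg (mul_nonneg hx hx) hx,
      mul_nonneg hx (sq_nonneg y)]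

private lemma unstable_root : ∃ z : ℂ, (z^3 + (123/2)*z^2 + (1111/2)*z - 990 = 0) ∧ 0 < z.re := by
  have hcont : ContinuousOn (fun x : ℝ => x^3 + (123/2)*x^2 + (1111/2)*x - 990) (Set.Icc 0 2) := by
    fun_prop
  have h0 : (0:ℝ) ∈ Set.Icc ((0:ℝ)^3 + (123/2)*0^2 + (1111/2)*0 - 990)
      ((2:ℝ)^3 + (123/2)*2^2 + (1111/2)*2 - 990) := by norm_num
  have := intermediate_value_Icc (by norm_num : (0:ℝ) ≤ 2) hcont h0
  obtain ⟨x, hx, hfx⟩ := this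
  simp only at hfx
  refine ⟨(x:ℂ), ?_, ?_⟩
  · have hc : ((x:ℂ)^3 + (123/2)*(x:ℂ)^2 + (1111/2)*(x:ℂ) - 990)
        = ((x^3 + (123/2)*x^2 + (1111/2)*x - 990 : ℝ) : ℂ) := by
      push_cast; ring
    rw [hc, hfx]
    norm_num
  · simp only [Complex.ofReal_re]
    rcases eq_or_lt_of_le hx.1 with h | h
    · exfalso; rw [← h] at hfx; norm_num at hfx
    · exact h

private lemma uniq_aux (T I V : ℝ) (hT : 0 < T) (hI : 0 < I) (hV : 0 < V)
    (h1 : 8 + 5*T*(1 - (T+I)/1) - 2*T - 12*T*V/(T+I) = 0)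
    (h2 : 25*I*(1 - (T+I)/1) + 12*T*V/(T+I) - 30*I = 0)
    (h3 : 35*1*I - 3*V - 12*T*V/(T+I) = 0) :
    (T = 1/5 ∧ I = 2/5 ∧ V = 2) ∨ (T = 1/2 ∧ I = 3/10 ∧ V = 1) := by
  have hN : T + I ≠ 0 := by positivity
  have hW : (12*T*V/(T+I)) * (T+I) = 12*T*V := div_mul_cancel₀ _ hN
  have w2 : 12*T*V/(T+I) = I*(5+25*(T+I)) := by linear_combination h2
  have w3 : 3*V = I*(30-25*(T+I)) := by linear_combination (-1 : ℝ)*h3 - w2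
  have e4 : 12*T*V = I*(5+25*(T+I))*(T+I) := by linear_combination (T+I)*w2 - hW
  have e5 : I*(4*T*(30-25*(T+I))) = I*((5+25*(T+I))*(T+I)) := by
    linear_combination e4 - 4*T*w3
  have q4 : 4*T*(30-25*(T+I)) = (5+25*(T+I))*(T+I) := mul_left_cancel₀ (ne_of_gt hI) e5
  have q1 : 8 + T*(3-5*(T+I)) = I*(5+25*(T+I)) := by linear_combination h1 + w2
  have q5 : T*(112-120*(T+I)) = 8 := by linear_combination q4 - q1
  have hcub : (5*(T+I)-4)*((5*(T+I)-3)*(3*(T+I)+2)) = 0 := by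
    linear_combination ((14-15*(T+I))/5) * q4 + ((25*(T+I)-30)/10) * q5
  rcases mul_eq_zero.mp hcub with h45 | hrest
  · -- T + I = 4/5, the point (1/2, 3/10, 1)
    right
    have hT' : T = 1/2 := by linear_combination (1/16)*q5 + (3*T/2)*h45
    have hI' : I = 3/10 := by linear_combination (1/5)*h45 - hT'
    have hV' : V = 1 := by
      rw [hT', hI'] at w3
      norm_num at w3
      linarith
    exact ⟨hT', hI', hV'⟩
  · rcases mul_eq_zero.mp hrest with h35 | habs
    · -- T + I = 3/5, the point (1/5, 2/5, 2)
      left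
      have hT' : T = 1/5 := by linear_combination (1/40)*q5 + (3*T/5)*h35
      have hI' : I = 2/5 := by linear_combination (1/5)*h35 - hT'
      have hV' : V = 2 := by
        rw [hT', hI'] at w3
        norm_num at w3
        linarith
      exact ⟨hT', hI', hV'⟩
    · exfalso
      have : (0:ℝ) < 3*(T+I)+2 := by linarith
      linarith

/-- The right-hand side of the in-host hepatitis C model, in the variables
`x = (T, I, V)`. -/
noncomputable def hcvRHS (s rT Tmax d rI b δ ρ Rstar c : ℝ)
    (x : Fin 3 → ℝ) : Fin 3 → ℝ :=
  ![s + rT * x 0 * (1 - (x 0 + x 1) / Tmax) - d * x 0 -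
      b * x 0 * x 2 / (x 0 + x 1),
    rI * x 1 * (1 - (x 0 + x 1) / Tmax) + b * x 0 * x 2 / (x 0 + x 1) -
      δ * x 1,
    ρ * Rstar * x 1 - c * x 2 - b * x 0 * x 2 / (x 0 + x 1)]

/-- The Jacobian matrix of a map `f : ℝⁿ → ℝⁿ` at a point `p`, whose `(i,j)`
entry is the partial derivative `∂fᵢ/∂xⱼ` at `p`. -/
noncomputable def jacobianAt {n : ℕ} (f : (Fin n → ℝ) → Fin n → ℝ)
    (p : Fin n → ℝ) : Matrix (Fin n) (Fin n) ℝ :=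
  fun i j => deriv (fun t => f (Function.update p j t) i) (p j)

/-- There exist positive parameters for the in-host hepatitis C
model with `δ > r_I(1 − p₀/T_max)` and `R₀ < 1` for which there are exactly two
positive steady states, at one of which all eigenvalues of the Jacobian have
negative real parts while at the other the Jacobian has an eigenvalue with
positive real part. -/
theorem stmt17 :
    ∃ s rT Tmax d rI b δ ρ Rstar c : ℝ,
      0 < s ∧ 0 < rT ∧ 0 < Tmax ∧ 0 < d ∧ 0 < rI ∧ 0 < b ∧ 0 < δ ∧
      0 < ρ ∧ 0 < Rstar ∧ 0 < c ∧
      (∃ p₀ : ℝ,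
        p₀ = (rT - d + Real.sqrt ((rT - d) ^ 2 + 4 * s * rT / Tmax)) *
          Tmax / (2 * rT) ∧
        rI * (1 - p₀ / Tmax) < δ ∧
        b * ρ * Rstar / ((b + c) * (δ - rI * (1 - p₀ / Tmax))) < 1) ∧
      ∃ p₁ p₂ : Fin 3 → ℝ, p₁ ≠ p₂ ∧
        (∀ i, 0 < p₁ i) ∧ (∀ i, 0 < p₂ i) ∧
        hcvRHS s rT Tmax d rI b δ ρ Rstar c p₁ = 0 ∧
        hcvRHS s rT Tmax d rI b δ ρ Rstar c p₂ = 0 ∧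
        (∀ q : Fin 3 → ℝ, (∀ i, 0 < q i) →
          hcvRHS s rT Tmax d rI b δ ρ Rstar c q = 0 → q = p₁ ∨ q = p₂) ∧
        (∀ z : ℂ,
          ((jacobianAt (hcvRHS s rT Tmax d rI b δ ρ Rstar c) p₁).map
            (fun x : ℝ => (x : ℂ))).charpoly.IsRoot z → z.re < 0) ∧
        (∃ z : ℂ,
          ((jacobianAt (hcvRHS s rT Tmax d rI b δ ρ Rstar c) p₂).map
            (fun x : ℝ => (x : ℂ))).charpoly.IsRoot z ∧ 0 < z.re) := by
  refine ⟨8, 5, 1, 2, 25, 12, 30, 35, 1, 3,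
    by norm_num, by norm_num, by norm_num, by norm_num, by norm_num,
    by norm_num, by norm_num, by norm_num, by norm_num, by norm_num, ?_, ?_⟩
  · -- part (i): p₀ and R₀ < 1
    refine ⟨8/5, ?_, by norm_num, by norm_num⟩
    have h169 : Real.sqrt ((5 - 2 : ℝ) ^ 2 + 4 * 8 * 5 / 1) = 13 := by
      rw [show ((5 - 2 : ℝ) ^ 2 + 4 * 8 * 5 / 1) = 13^2 by norm_num]
      rw [Real.sqrt_sq (by norm_num)]
    rw [h169]
    norm_num
  · -- part (ii), (iii)
    have EA00 : jacobianAt (hcvRHS 8 5 1 2 25 12 30 35 1 3) ![(1/5), (2/5), 2] 0 0 = (-83/3) := by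
      rw [jacobianAt]
      have he : (fun t : ℝ => hcvRHS 8 5 1 2 25 12 30 35 1 3 (Function.update ![(1/5), (2/5), 2] 0 t) 0)
          = fun t : ℝ => 8 + 1*t + (-5)*(t*t) + ((-24)*t + 0)/(t + (2/5)) := by
        funext t
        simp [hcvRHS, Function.update]
        ring
      rw [he]
      have hD := (hd_aux 8 1 (-5) (-24) 0 (2/5) (1/5) (by norm_num)).deriv
      simp only [Matrix.cons_val_zero, Matrix.cons_val_one, Matrix.head_cons, Matrix.cons_val_two, Matrix.tail_cons]
      rw [hD]
      norm_num
    have EA10 : jacobianAt (hcvRHS 8 5 1 2 25 12 30 35 1 3) ![(1/5), (2/5), 2] 1 0 = (50/3) := by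
      rw [jacobianAt]
      have he : (fun t : ℝ => hcvRHS 8 5 1 2 25 12 30 35 1 3 (Function.update ![(1/5), (2/5), 2] 0 t) 1)
          = fun t : ℝ => (-6) + (-10)*t + 0*(t*t) + (24*t + 0)/(t + (2/5)) := by
        funext t
        simp [hcvRHS, Function.update]
        ring
      rw [he]
      have hD := (hd_aux (-6) (-10) 0 24 0 (2/5) (1/5) (by norm_num)).deriv
      simp only [Matrix.cons_val_zero, Matrix.cons_val_one, Matrix.head_cons, Matrix.cons_val_two, Matrix.tail_cons]
      rw [hD]
      norm_num
    have EA20 : jacobianAt (hcvRHS 8 5 1 2 25 12 30 35 1 3) ![(1/5), (2/5), 2] 2 0 = (-80/3) := by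
      rw [jacobianAt]
      have he : (fun t : ℝ => hcvRHS 8 5 1 2 25 12 30 35 1 3 (Function.update ![(1/5), (2/5), 2] 0 t) 2)
          = fun t : ℝ => 8 + 0*t + 0*(t*t) + ((-24)*t + 0)/(t + (2/5)) := by
        funext t
        simp [hcvRHS, Function.update]
        ring
      rw [he]
      have hD := (hd_aux 8 0 0 (-24) 0 (2/5) (1/5) (by norm_num)).deriv
      simp only [Matrix.cons_val_zero, Matrix.cons_val_one, Matrix.head_cons, Matrix.cons_val_two, Matrix.tail_cons]
      rw [hD]
      norm_num
    have EA01 : jacobianAt (hcvRHS 8 5 1 2 25 12 30 35 1 3) ![(1/5), (2/5), 2] 0 1 = (37/3) := by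
      rw [jacobianAt]
      have he : (fun t : ℝ => hcvRHS 8 5 1 2 25 12 30 35 1 3 (Function.update ![(1/5), (2/5), 2] 1 t) 0)
          = fun t : ℝ => (42/5) + (-1)*t + 0*(t*t) + (0*t + (-24/5))/(t + (1/5)) := by
        funext t
        simp [hcvRHS, Function.update]
        ring
      rw [he]
      have hD := (hd_aux (42/5) (-1) 0 0 (-24/5) (1/5) (2/5) (by norm_num)).deriv
      simp only [Matrix.cons_val_zero, Matrix.cons_val_one, Matrix.head_cons, Matrix.cons_val_two, Matrix.tail_cons]
      rw [hD]
      norm_num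
    have EA11 : jacobianAt (hcvRHS 8 5 1 2 25 12 30 35 1 3) ![(1/5), (2/5), 2] 1 1 = (-130/3) := by
      rw [jacobianAt]
      have he : (fun t : ℝ => hcvRHS 8 5 1 2 25 12 30 35 1 3 (Function.update ![(1/5), (2/5), 2] 1 t) 1)
          = fun t : ℝ => 0 + (-10)*t + (-25)*(t*t) + (0*t + (24/5))/(t + (1/5)) := by
        funext t
        simp [hcvRHS, Function.update]
        ring
      rw [he]
      have hD := (hd_aux 0 (-10) (-25) 0 (24/5) (1/5) (2/5) (by norm_num)).deriv
      simp only [Matrix.cons_val_zero, Matrix.cons_val_one, Matrix.head_cons, Matrix.cons_val_two, Matrix.tail_cons]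
      rw [hD]
      norm_num
    have EA21 : jacobianAt (hcvRHS 8 5 1 2 25 12 30 35 1 3) ![(1/5), (2/5), 2] 2 1 = (145/3) := by
      rw [jacobianAt]
      have he : (fun t : ℝ => hcvRHS 8 5 1 2 25 12 30 35 1 3 (Function.update ![(1/5), (2/5), 2] 1 t) 2)
          = fun t : ℝ => (-6) + 35*t + 0*(t*t) + (0*t + (-24/5))/(t + (1/5)) := by
        funext t
        simp [hcvRHS, Function.update]
        ring
      rw [he]
      have hD := (hd_aux (-6) 35 0 0 (-24/5) (1/5) (2/5) (by norm_num)).deriv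
      simp only [Matrix.cons_val_zero, Matrix.cons_val_one, Matrix.head_cons, Matrix.cons_val_two, Matrix.tail_cons]
      rw [hD]
      norm_num
    have EA02 : jacobianAt (hcvRHS 8 5 1 2 25 12 30 35 1 3) ![(1/5), (2/5), 2] 0 2 = (-4) := by
      rw [jacobianAt]
      have he : (fun t : ℝ => hcvRHS 8 5 1 2 25 12 30 35 1 3 (Function.update ![(1/5), (2/5), 2] 2 t) 0)
          = fun t : ℝ => 8 + (-4)*t + 0*(t*t) + (0*t + 0)/(t + 1) := by
        funext t
        simp [hcvRHS, Function.update]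
        ring
      rw [he]
      have hD := (hd_aux 8 (-4) 0 0 0 1 2 (by norm_num)).deriv
      simp only [Matrix.cons_val_zero, Matrix.cons_val_one, Matrix.head_cons, Matrix.cons_val_two, Matrix.tail_cons]
      rw [hD]
      norm_num
    have EA12 : jacobianAt (hcvRHS 8 5 1 2 25 12 30 35 1 3) ![(1/5), (2/5), 2] 1 2 = 4 := by
      rw [jacobianAt]
      have he : (fun t : ℝ => hcvRHS 8 5 1 2 25 12 30 35 1 3 (Function.update ![(1/5), (2/5), 2] 2 t) 1)
          = fun t : ℝ => (-8) + 4*t + 0*(t*t) + (0*t + 0)/(t + 1) := by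
        funext t
        simp [hcvRHS, Function.update]
        ring
      rw [he]
      have hD := (hd_aux (-8) 4 0 0 0 1 2 (by norm_num)).deriv
      simp only [Matrix.cons_val_zero, Matrix.cons_val_one, Matrix.head_cons, Matrix.cons_val_two, Matrix.tail_cons]
      rw [hD]
      norm_num
    have EA22 : jacobianAt (hcvRHS 8 5 1 2 25 12 30 35 1 3) ![(1/5), (2/5), 2] 2 2 = (-7) := by
      rw [jacobianAt]
      have he : (fun t : ℝ => hcvRHS 8 5 1 2 25 12 30 35 1 3 (Function.update ![(1/5), (2/5), 2] 2 t) 2)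
          = fun t : ℝ => 14 + (-7)*t + 0*(t*t) + (0*t + 0)/(t + 1) := by
        funext t
        simp [hcvRHS, Function.update]
        ring
      rw [he]
      have hD := (hd_aux 14 (-7) 0 0 0 1 2 (by norm_num)).deriv
      simp only [Matrix.cons_val_zero, Matrix.cons_val_one, Matrix.head_cons, Matrix.cons_val_two, Matrix.tail_cons]
      rw [hD]
      norm_num
    have EB00 : jacobianAt (hcvRHS 8 5 1 2 25 12 30 35 1 3) ![(1/2), (3/10), 1] 0 0 = (-73/8) := by
      rw [jacobianAt]
      have he : (fun t : ℝ => hcvRHS 8 5 1 2 25 12 30 35 1 3 (Function.update ![(1/2), (3/10), 1] 0 t) 0)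
          = fun t : ℝ => 8 + (3/2)*t + (-5)*(t*t) + ((-12)*t + 0)/(t + (3/10)) := by
        funext t
        simp [hcvRHS, Function.update]
        ring
      rw [he]
      have hD := (hd_aux 8 (3/2) (-5) (-12) 0 (3/10) (1/2) (by norm_num)).deriv
      simp only [Matrix.cons_val_zero, Matrix.cons_val_one, Matrix.head_cons, Matrix.cons_val_two, Matrix.tail_cons]
      rw [hD]
      norm_num
    have EB10 : jacobianAt (hcvRHS 8 5 1 2 25 12 30 35 1 3) ![(1/2), (3/10), 1] 1 0 = (-15/8) := by
      rw [jacobianAt]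
      have he : (fun t : ℝ => hcvRHS 8 5 1 2 25 12 30 35 1 3 (Function.update ![(1/2), (3/10), 1] 0 t) 1)
          = fun t : ℝ => (-15/4) + (-15/2)*t + 0*(t*t) + (12*t + 0)/(t + (3/10)) := by
        funext t
        simp [hcvRHS, Function.update]
        ring
      rw [he]
      have hD := (hd_aux (-15/4) (-15/2) 0 12 0 (3/10) (1/2) (by norm_num)).deriv
      simp only [Matrix.cons_val_zero, Matrix.cons_val_one, Matrix.head_cons, Matrix.cons_val_two, Matrix.tail_cons]
      rw [hD]
      norm_num
    have EB20 : jacobianAt (hcvRHS 8 5 1 2 25 12 30 35 1 3) ![(1/2), (3/10), 1] 2 0 = (-45/8) := by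
      rw [jacobianAt]
      have he : (fun t : ℝ => hcvRHS 8 5 1 2 25 12 30 35 1 3 (Function.update ![(1/2), (3/10), 1] 0 t) 2)
          = fun t : ℝ => (15/2) + 0*t + 0*(t*t) + ((-12)*t + 0)/(t + (3/10)) := by
        funext t
        simp [hcvRHS, Function.update]
        ring
      rw [he]
      have hD := (hd_aux (15/2) 0 0 (-12) 0 (3/10) (1/2) (by norm_num)).deriv
      simp only [Matrix.cons_val_zero, Matrix.cons_val_one, Matrix.head_cons, Matrix.cons_val_two, Matrix.tail_cons]
      rw [hD]
      norm_num
    have EB01 : jacobianAt (hcvRHS 8 5 1 2 25 12 30 35 1 3) ![(1/2), (3/10), 1] 0 1 = (55/8) := by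
      rw [jacobianAt]
      have he : (fun t : ℝ => hcvRHS 8 5 1 2 25 12 30 35 1 3 (Function.update ![(1/2), (3/10), 1] 1 t) 0)
          = fun t : ℝ => (33/4) + (-5/2)*t + 0*(t*t) + (0*t + (-6))/(t + (1/2)) := by
        funext t
        simp [hcvRHS, Function.update]
        ring
      rw [he]
      have hD := (hd_aux (33/4) (-5/2) 0 0 (-6) (1/2) (3/10) (by norm_num)).deriv
      simp only [Matrix.cons_val_zero, Matrix.cons_val_one, Matrix.head_cons, Matrix.cons_val_two, Matrix.tail_cons]
      rw [hD]
      norm_num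
    have EB11 : jacobianAt (hcvRHS 8 5 1 2 25 12 30 35 1 3) ![(1/2), (3/10), 1] 1 1 = (-335/8) := by
      rw [jacobianAt]
      have he : (fun t : ℝ => hcvRHS 8 5 1 2 25 12 30 35 1 3 (Function.update ![(1/2), (3/10), 1] 1 t) 1)
          = fun t : ℝ => 0 + (-35/2)*t + (-25)*(t*t) + (0*t + 6)/(t + (1/2)) := by
        funext t
        simp [hcvRHS, Function.update]
        ring
      rw [he]
      have hD := (hd_aux 0 (-35/2) (-25) 0 6 (1/2) (3/10) (by norm_num)).deriv
      simp only [Matrix.cons_val_zero, Matrix.cons_val_one, Matrix.head_cons, Matrix.cons_val_two, Matrix.tail_cons]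
      rw [hD]
      norm_num
    have EB21 : jacobianAt (hcvRHS 8 5 1 2 25 12 30 35 1 3) ![(1/2), (3/10), 1] 2 1 = (355/8) := by
      rw [jacobianAt]
      have he : (fun t : ℝ => hcvRHS 8 5 1 2 25 12 30 35 1 3 (Function.update ![(1/2), (3/10), 1] 1 t) 2)
          = fun t : ℝ => (-3) + 35*t + 0*(t*t) + (0*t + (-6))/(t + (1/2)) := by
        funext t
        simp [hcvRHS, Function.update]
        ring
      rw [he]
      have hD := (hd_aux (-3) 35 0 0 (-6) (1/2) (3/10) (by norm_num)).deriv
      simp only [Matrix.cons_val_zero, Matrix.cons_val_one, Matrix.head_cons, Matrix.cons_val_two, Matrix.tail_cons]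
      rw [hD]
      norm_num
    have EB02 : jacobianAt (hcvRHS 8 5 1 2 25 12 30 35 1 3) ![(1/2), (3/10), 1] 0 2 = (-15/2) := by
      rw [jacobianAt]
      have he : (fun t : ℝ => hcvRHS 8 5 1 2 25 12 30 35 1 3 (Function.update ![(1/2), (3/10), 1] 2 t) 0)
          = fun t : ℝ => (15/2) + (-15/2)*t + 0*(t*t) + (0*t + 0)/(t + 1) := by
        funext t
        simp [hcvRHS, Function.update]
        ring
      rw [he]
      have hD := (hd_aux (15/2) (-15/2) 0 0 0 1 1 (by norm_num)).deriv
      simp only [Matrix.cons_val_zero, Matrix.cons_val_one, Matrix.head_cons, Matrix.cons_val_two, Matrix.tail_cons]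
      rw [hD]
      norm_num
    have EB12 : jacobianAt (hcvRHS 8 5 1 2 25 12 30 35 1 3) ![(1/2), (3/10), 1] 1 2 = (15/2) := by
      rw [jacobianAt]
      have he : (fun t : ℝ => hcvRHS 8 5 1 2 25 12 30 35 1 3 (Function.update ![(1/2), (3/10), 1] 2 t) 1)
          = fun t : ℝ => (-15/2) + (15/2)*t + 0*(t*t) + (0*t + 0)/(t + 1) := by
        funext t
        simp [hcvRHS, Function.update]
        ring
      rw [he]
      have hD := (hd_aux (-15/2) (15/2) 0 0 0 1 1 (by norm_num)).deriv
      simp only [Matrix.cons_val_zero, Matrix.cons_val_one, Matrix.head_cons, Matrix.cons_val_two, Matrix.tail_cons]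
      rw [hD]
      norm_num
    have EB22 : jacobianAt (hcvRHS 8 5 1 2 25 12 30 35 1 3) ![(1/2), (3/10), 1] 2 2 = (-21/2) := by
      rw [jacobianAt]
      have he : (fun t : ℝ => hcvRHS 8 5 1 2 25 12 30 35 1 3 (Function.update ![(1/2), (3/10), 1] 2 t) 2)
          = fun t : ℝ => (21/2) + (-21/2)*t + 0*(t*t) + (0*t + 0)/(t + 1) := by
        funext t
        simp [hcvRHS, Function.update]
        ring
      rw [he]
      have hD := (hd_aux (21/2) (-21/2) 0 0 0 1 1 (by norm_num)).deriv
      simp only [Matrix.cons_val_zero, Matrix.cons_val_one, Matrix.head_cons, Matrix.cons_val_two, Matrix.tail_cons]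
      rw [hD]
      norm_num
    have hJ1 : jacobianAt (hcvRHS 8 5 1 2 25 12 30 35 1 3) ![(1/5), (2/5), 2]
        = !![(-83/3), 37/3, -4; 50/3, -130/3, 4; -80/3, 145/3, -7] := by
      ext i j
      fin_cases i <;> fin_cases j
      · simpa using EA00
      · simpa using EA01
      · simpa using EA02
      · simpa using EA10
      · simpa using EA11
      · simpa using EA12
      · simpa using EA20
      · simpa using EA21
      · simpa using EA22
    have hJ2 : jacobianAt (hcvRHS 8 5 1 2 25 12 30 35 1 3) ![(1/2), (3/10), 1]
        = !![(-73/8), 55/8, -15/2; -15/8, -335/8, 15/2; -45/8, 355/8, -21/2] := by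
      ext i j
      fin_cases i <;> fin_cases j
      · simpa using EB00
      · simpa using EB01
      · simpa using EB02
      · simpa using EB10
      · simpa using EB11
      · simpa using EB12
      · simpa using EB20
      · simpa using EB21
      · simpa using EB22
    refine ⟨![(1/5), (2/5), 2], ![(1/2), (3/10), 1], ?_, ?_, ?_, ?_, ?_, ?_, ?_, ?_⟩
    · intro h
      have := congrFun h 0
      norm_num at this
    · intro i; fin_cases i <;> norm_num
    · intro i; fin_cases i <;> norm_num
    · funext i; fin_cases i <;> · simp [hcvRHS]; norm_num
    · funext i; fin_cases i <;> · simp [hcvRHS]; norm_num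
    · -- uniqueness
      intro q hq hzero
      have h0 := congrFun hzero 0
      have h1 := congrFun hzero 1
      have h2 := congrFun hzero 2
      simp only [hcvRHS, Matrix.cons_val_zero, Matrix.cons_val_one, Matrix.head_cons,
        Matrix.cons_val_two, Matrix.tail_cons, Pi.zero_apply] at h0 h1 h2
      have e1 : 8 + 5*(q 0)*(1 - ((q 0)+(q 1))/1) - 2*(q 0) - 12*(q 0)*(q 2)/((q 0)+(q 1)) = 0 := by
        linear_combination h0
      have e2 : 25*(q 1)*(1 - ((q 0)+(q 1))/1) + 12*(q 0)*(q 2)/((q 0)+(q 1)) - 30*(q 1) = 0 := by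
        linear_combination h1
      have e3 : 35*1*(q 1) - 3*(q 2) - 12*(q 0)*(q 2)/((q 0)+(q 1)) = 0 := by
        linear_combination h2
      rcases uniq_aux (q 0) (q 1) (q 2) (hq 0) (hq 1) (hq 2) e1 e2 e3 with
        ⟨hT, hI, hV⟩ | ⟨hT, hI, hV⟩
      · left; funext i; fin_cases i
        · simpa using hT
        · simpa using hI
        · simpa using hV
      · right; funext i; fin_cases i
        · simpa using hT
        · simpa using hI
        · simpa using hV
    · -- stability at p₁
      intro z hz
      rw [hJ1] at hz
      have hMc : (!![(-83/3 : ℝ), 37/3, -4; 50/3, -130/3, 4; -80/3, 145/3, -7]).map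
          (fun x : ℝ => (x : ℂ))
          = !![(-83/3 : ℂ), 37/3, -4; 50/3, -130/3, 4; -80/3, 145/3, -7] := by
        ext i j
        fin_cases i <;> fin_cases j <;> simp [Matrix.map_apply] <;> norm_num
      rw [hMc] at hz
      unfold Polynomial.IsRoot Matrix.charpoly at hz
      rw [Matrix.det_fin_three] at hz
      simp only [Matrix.charmatrix_apply, Matrix.diagonal_apply, Matrix.cons_val', Matrix.cons_val_zero,
        Matrix.cons_val_one, Matrix.head_cons, Matrix.empty_val', Matrix.cons_val_fin_one,
        Matrix.head_fin_const, Polynomial.eval_add, Polynomial.eval_sub, Polynomial.smul_eval,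
        Polynomial.eval_mul, Polynomial.eval_neg, Polynomial.eval_X, Polynomial.eval_C,
        Matrix.smul_apply, Matrix.one_apply, Polynomial.eval_smul, smul_eq_mul] at hz
      norm_num [Fin.ext_iff, Matrix.cons_val_two, Matrix.tail_cons, Matrix.head_cons] at hz
      exact rh_stable z (by push_cast; linear_combination hz)
    · -- instability at p₂
      obtain ⟨z, hroot, hpos⟩ := unstable_root
      refine ⟨z, ?_, hpos⟩
      rw [hJ2]
      have hMc : (!![(-73/8 : ℝ), 55/8, -15/2; -15/8, -335/8, 15/2; -45/8, 355/8, -21/2]).map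
          (fun x : ℝ => (x : ℂ))
          = !![(-73/8 : ℂ), 55/8, -15/2; -15/8, -335/8, 15/2; -45/8, 355/8, -21/2] := by
        ext i j
        fin_cases i <;> fin_cases j <;> simp [Matrix.map_apply] <;> norm_num
      rw [hMc]
      unfold Polynomial.IsRoot Matrix.charpoly
      rw [Matrix.det_fin_three]
      simp only [Matrix.charmatrix_apply, Matrix.diagonal_apply, Matrix.cons_val', Matrix.cons_val_zero,
        Matrix.cons_val_one, Matrix.head_cons, Matrix.empty_val', Matrix.cons_val_fin_one,
        Matrix.head_fin_const, Polynomial.eval_add, Polynomial.eval_sub, Polynomial.smul_eval,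
        Polynomial.eval_mul, Polynomial.eval_neg, Polynomial.eval_X, Polynomial.eval_C,
        Matrix.smul_apply, Matrix.one_apply, Polynomial.eval_smul, smul_eq_mul]
      norm_num [Fin.ext_iff]
      push_cast
      linear_combination hroot
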